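/- For every finite simple graph G = (V,E), the map φ_G that sends a decomposition Π of G to the set of edges {v,w} ∈ E such that v and w lie in distinct sets of Π is a bijection between the set of decompositions of G and the set of multicuts of G. -/

import Mathlib

open SimpleGraph

variable {V : Type}

section Defs

variable [Fintype V] [DecidableEq V]

/-- A decomposition of a graph `G`: a partition of the vertex set into
blocks each of which induces a connected subgraph of `G`. -/
def IsDecomposition (G : SimpleGraph V) (P : Set (Set V)) : Prop :=
  (∀ U ∈ P, ∀ W ∈ P, U ≠ W → Disjoint U W) ∧
  (∀ v : V, ∃ U ∈ P, v ∈ U) ∧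
  (∀ U ∈ P, (G.induce U).Connected)

/-- An edge `e` straddles distinct blocks of `P` if no block contains both endpoints. -/
def Straddles (P : Set (Set V)) (e : Sym2 V) : Prop := ∀ U ∈ P, ¬ ∀ v ∈ e, v ∈ U

/-- The set of edges of `G` straddling distinct blocks of `P` (the map `φ_G`). -/
def cutEdges (G : SimpleGraph V) (P : Set (Set V)) : Set (Sym2 V) :=
  {e | e ∈ G.edgeSet ∧ Straddles P e}

/-- A multicut of `G`: a set of edges meeting every cycle of `G` in a number of
edges different from 1. -/
def IsMulticut (G : SimpleGraph V) (M : Set (Sym2 V)) : Prop :=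
  M ⊆ G.edgeSet ∧ ∀ ⦃u : V⦄ (c : G.Walk u u), c.IsCycle →
    (M ∩ {e | e ∈ c.edges}).ncard ≠ 1

/-- A multicut of `G'` lifted from `G`. -/
def IsLiftedMulticut (G G' : SimpleGraph V) (M : Set (Sym2 V)) : Prop :=
  ∃ P : Set (Set V), IsDecomposition G P ∧ M = cutEdges G' P

/-- The closed walk `c` has a chord in the graph `H`: an edge of `H` joining two
vertices of `c` that is not an edge of `c`. -/
def HasChord (H : SimpleGraph V) {G : SimpleGraph V} {u : V} (c : G.Walk u u) : Prop :=
  ∃ e ∈ H.edgeSet, (∀ v ∈ e, v ∈ c.support) ∧ e ∉ c.edges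

/-- A `vw`-cut of `G`: a minimal set of edges whose removal disconnects `v` from `w`. -/
def IsCut (G : SimpleGraph V) (v w : V) (C : Finset (Sym2 V)) : Prop :=
  ↑C ⊆ G.edgeSet ∧ ¬ (G.deleteEdges ↑C).Reachable v w ∧
    ∀ C' : Finset (Sym2 V), C' ⊂ C → (G.deleteEdges ↑C').Reachable v w

/-- The cycle inequalities for cycles of `G`. -/
def CycleIneqs (G : SimpleGraph V) (x : Sym2 V → ℕ) : Prop :=
  ∀ ⦃u : V⦄ (c : G.Walk u u), c.IsCycle → ∀ e ∈ c.edges,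
    x e ≤ ∑ e' ∈ c.edges.toFinset.erase e, x e'

/-- The path inequalities for pairs `vw ∈ E' \ E` and `vw`-paths of `G`. -/
def PathIneqs (G G' : SimpleGraph V) (x : Sym2 V → ℕ) : Prop :=
  ∀ v w : V, s(v, w) ∈ G'.edgeSet \ G.edgeSet →
    ∀ p : G.Walk v w, p.IsPath → x s(v, w) ≤ ∑ e ∈ p.edges.toFinset, x e

/-- The cut inequalities for pairs `vw ∈ E' \ E` and `vw`-cuts of `G`. -/
def CutIneqs (G G' : SimpleGraph V) (x : Sym2 V → ℕ) : Prop :=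
  ∀ v w : V, s(v, w) ∈ G'.edgeSet \ G.edgeSet →
    ∀ C : Finset (Sym2 V), IsCut G v w C → 1 - x s(v, w) ≤ ∑ e ∈ C, (1 - x e)

/-- Characteristic vector of an edge set, in `ℝ^{Sym2 V}`. -/
noncomputable def charVec (M : Set (Sym2 V)) : Sym2 V → ℝ :=
  fun e => by classical exact if e ∈ M then 1 else 0

/-- The characteristic vectors of multicuts of `G'` lifted from `G`
(the vertex set of the lifted multicut polytope `Ξ_{GG'}`). -/
def liftedVectors (G G' : SimpleGraph V) : Set (Sym2 V → ℝ) :=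
  {x | ∃ M : Set (Sym2 V), IsLiftedMulticut G G' M ∧ x = charVec M}

/-- The characteristic vectors of multicuts of `G'`. -/
def multicutVectors (G' : SimpleGraph V) : Set (Sym2 V → ℝ) :=
  {x | ∃ M : Set (Sym2 V), IsMulticut G' M ∧ x = charVec M}

/-- The inequality `ineq`, with associated equality `eqn`, defines a facet of the
lifted multicut polytope `Ξ_{GG'}` (which has dimension `|E'|`): it is valid, and
the face it induces has dimension `|E'| - 1`. -/
def DefinesFacet (G G' : SimpleGraph V) (ineq eqn : (Sym2 V → ℝ) → Prop) : Prop :=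
  (∀ x ∈ liftedVectors G G', ineq x) ∧
  Module.finrank ℝ (vectorSpan ℝ {x ∈ liftedVectors G G' | eqn x}) = G'.edgeSet.ncard - 1

/-- Facet-defining for the multicut polytope `Ξ_{G'}`. -/
def DefinesFacetMC (G' : SimpleGraph V) (ineq eqn : (Sym2 V → ℝ) → Prop) : Prop :=
  (∀ x ∈ multicutVectors G', ineq x) ∧
  Module.finrank ℝ (vectorSpan ℝ {x ∈ multicutVectors G' | eqn x}) = G'.edgeSet.ncard - 1

/-- `u` is a `v`-`w`-cut-vertex: it lies on every `vw`-path of `G`. -/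
def IsCutVertex (G : SimpleGraph V) (v w u : V) : Prop :=
  ∀ p : G.Walk v w, p.IsPath → u ∈ p.support

/-- `S` is a `u`-`v`-separating node set of `G`. -/
def IsSeparatingSet (G : SimpleGraph V) (u v : V) (S : Set V) : Prop :=
  u ∉ S ∧ v ∉ S ∧ ∀ p : G.Walk u v, p.IsPath → ∃ s ∈ S, s ∈ p.support

/-- The side of the cut `C` containing `v`. -/
def vSide (G : SimpleGraph V) (C : Finset (Sym2 V)) (v : V) : Set V :=
  {u | (G.deleteEdges ↑C).Reachable v u}

/-- The component of `G` induced by `U` is properly `(vw,C)`-connected. -/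
def ProperlyConnected (G : SimpleGraph V) (v w : V) (C : Finset (Sym2 V)) (U : Set V) : Prop :=
  (G.induce U).Connected ∧ v ∈ U ∧ w ∈ U ∧
    ({e | e ∈ C ∧ ∀ u ∈ e, u ∈ U} : Set (Sym2 V)).ncard = 1

/-- The component of `G` induced by `U` is improperly `(vw,C)`-connected. -/
def ImproperlyConnected (G : SimpleGraph V) (v w : V) (C : Finset (Sym2 V)) (U : Set V) : Prop :=
  (G.induce U).Connected ∧ (U ⊆ vSide G C v ∨ U ⊆ vSide G C w)

/-- `(vw,C)`-connected: properly or improperly so. -/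
def VWCConnected (G : SimpleGraph V) (v w : V) (C : Finset (Sym2 V)) (U : Set V) : Prop :=
  ProperlyConnected G v w C U ∨ ImproperlyConnected G v w C U

/-- The vertex set of the maximal component of `H` containing `u`. -/
def compSupp (H : SimpleGraph V) (u : V) : Set V := {u' | H.Reachable u u'}

end Defs

section Lemmas
set_option linter.unusedSectionVars false
variable [Fintype V] [DecidableEq V] {G H : SimpleGraph V}

lemma reachable_of_induce_walk {U : Set V}
    (hAdj : ∀ a b : V, a ∈ U → b ∈ U → G.Adj a b → H.Adj a b)
    {x y : ↥U} (p : (G.induce U).Walk x y) : H.Reachable ↑x ↑y := by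
  induction p with
  | nil => exact Reachable.refl _
  | @cons a b c h q ih =>
    exact (Adj.reachable (hAdj a b a.2 b.2 (by simpa using h))).trans ih

lemma walk_mem_block {P : Set (Set V)} (hP : IsDecomposition G P)
    {x y : V} (p : (G.deleteEdges (cutEdges G P)).Walk x y) :
    ∀ U ∈ P, x ∈ U → y ∈ U := by
  induction p with
  | nil => exact fun U _ h => h
  | @cons a b c h q ih =>
    intro U hU ha
    rw [deleteEdges_adj] at h
    obtain ⟨hadj, hnot⟩ := h
    have hstr : ¬ Straddles P s(a, b) := fun hs => hnot ⟨(G.mem_edgeSet).mpr hadj, hs⟩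
    unfold Straddles at hstr; push_neg at hstr
    obtain ⟨W, hW, hall⟩ := hstr
    have haW : a ∈ W := hall a (by simp)
    have hbW : b ∈ W := hall b (by simp)
    have hUW : U = W := by
      by_contra hne
      exact Set.disjoint_left.mp (hP.1 U hU W hW hne) ha haW
    exact ih U hU (hUW ▸ hbW)

lemma block_subset_comp {P : Set (Set V)} (hP : IsDecomposition G P) {U : Set V}
    (hU : U ∈ P) {v u : V} (hv : v ∈ U) (hu : u ∈ U) :
    (G.deleteEdges (cutEdges G P)).Reachable v u := by
  obtain ⟨p⟩ := (hP.2.2 U hU).preconnected ⟨v, hv⟩ ⟨u, hu⟩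
  refine reachable_of_induce_walk (fun a b ha hb hadj => ?_) p
  rw [deleteEdges_adj]
  refine ⟨hadj, fun hmem => hmem.2 U hU (fun x hx => ?_)⟩
  rcases Sym2.mem_iff.mp hx with rfl | rfl
  · exact ha
  · exact hb

lemma block_eq {P : Set (Set V)} (hP : IsDecomposition G P) {U : Set V}
    (hU : U ∈ P) {v : V} (hv : v ∈ U) :
    U = compSupp (G.deleteEdges (cutEdges G P)) v := by
  ext u
  constructor
  · exact fun hu => block_subset_comp hP hU hv hu
  · rintro ⟨p⟩
    exact walk_mem_block hP p U hU hv

lemma isMulticut_cutEdges {P : Set (Set V)} (hP : IsDecomposition G P) :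
    IsMulticut G (cutEdges G P) := by
  refine ⟨fun e he => he.1, ?_⟩
  intro u c hc hcard
  rw [Set.ncard_eq_one] at hcard
  obtain ⟨e, he⟩ := hcard
  induction e using Sym2.ind with
  | _ a b =>
  have heM : s(a, b) ∈ cutEdges G P ∧ s(a, b) ∈ c.edges := by
    have : s(a,b) ∈ cutEdges G P ∩ {e | e ∈ c.edges} := he ▸ rfl
    exact this
  have hothers : ∀ f ∈ c.edges, f ≠ s(a, b) → f ∉ cutEdges G P := by
    intro f hf hne hfM
    exact hne (by have : f ∈ ({s(a,b)} : Set (Sym2 V)) := he ▸ ⟨hfM, hf⟩; exact this)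
  have hsub : ∀ f ∈ c.edges, f ∈ (G.deleteEdges (cutEdges G P \ {s(a,b)})).edgeSet := by
    intro f hf
    rw [edgeSet_deleteEdges]
    refine ⟨c.edges_subset_edgeSet hf, ?_⟩
    rintro ⟨hfM, hfe⟩
    exact hothers f hf (by simpa using hfe) hfM
  set G' := G.deleteEdges (cutEdges G P \ {s(a,b)}) with hG'
  have hc' : (c.transfer G' hsub).IsCycle := hc.transfer hsub
  have he' : s(a, b) ∈ (c.transfer G' hsub).edges := by
    rw [Walk.edges_transfer]; exact heM.2
  have hkey := adj_and_reachable_delete_edges_iff_exists_cycle.mpr ⟨u, _, hc', he'⟩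
  obtain ⟨hadj, hreach⟩ := hkey
  have hGeq : G' \ fromEdgeSet {s(a,b)} = G.deleteEdges (cutEdges G P) := by
    show G'.deleteEdges {s(a,b)} = _
    rw [hG', deleteEdges_deleteEdges, Set.diff_union_of_subset
      (Set.singleton_subset_iff.mpr heM.1)]
  rw [show G'.deleteEdges {s(a,b)} = G.deleteEdges (cutEdges G P) from hGeq] at hreach
  obtain ⟨p⟩ := hreach
  obtain ⟨U, hU, haU⟩ := hP.2.1 a
  have hbU : b ∈ U := walk_mem_block hP p U hU haU
  refine heM.1.2 U hU (fun x hx => ?_)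
  rcases Sym2.mem_iff.mp hx with rfl | rfl
  · exact haU
  · exact hbU

lemma not_reachable_of_multicut {M : Set (Sym2 V)} (hM : IsMulticut G M) {a b : V}
    (hab : s(a, b) ∈ M) : ¬ (G.deleteEdges M).Reachable a b := by
  intro hr
  have hadj : G.Adj a b := (G.mem_edgeSet).mp (hM.1 hab)
  obtain ⟨p⟩ := hr.symm
  have hq := p.toPath.2
  set q : (G.deleteEdges M).Walk b a := p.toPath.1 with hqdef
  have hsubM : ∀ f ∈ q.edges, f ∈ G.edgeSet ∧ f ∉ M := by
    intro f hf
    have := q.edges_subset_edgeSet hf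
    rwa [edgeSet_deleteEdges] at this
  have hsub : ∀ f ∈ q.edges, f ∈ G.edgeSet := fun f hf => (hsubM f hf).1
  have hq' : (q.transfer G hsub).IsPath := hq.transfer hsub
  have hnotmem : s(a, b) ∉ (q.transfer G hsub).edges := by
    rw [Walk.edges_transfer]
    exact fun hmem => (hsubM _ hmem).2 hab
  have hc : (Walk.cons hadj (q.transfer G hsub)).IsCycle :=
    (Walk.cons_isCycle_iff _ hadj).mpr ⟨hq', hnotmem⟩
  refine hM.2 _ hc ?_
  rw [Set.ncard_eq_one]
  refine ⟨s(a, b), ?_⟩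
  ext f
  simp only [Set.mem_inter_iff, Set.mem_setOf_eq, Walk.edges_cons, List.mem_cons,
    Set.mem_singleton_iff, Walk.edges_transfer]
  constructor
  · rintro ⟨hfM, rfl | hf⟩
    · rfl
    · exact absurd hfM (hsubM f hf).2
  · rintro rfl
    exact ⟨hab, Or.inl rfl⟩

lemma induce_reachable {S : Set V} (hle : H ≤ G)
    (hS : ∀ a b : V, a ∈ S → H.Adj a b → b ∈ S) {x y : V} (p : H.Walk x y) :
    ∀ hx : x ∈ S, ∃ hy : y ∈ S, (G.induce S).Reachable ⟨x, hx⟩ ⟨y, hy⟩ := by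
  induction p with
  | nil => exact fun hx => ⟨hx, Reachable.refl _⟩
  | @cons a b c h q ih =>
    intro hx
    have hb : b ∈ S := hS a b hx h
    obtain ⟨hy, hr⟩ := ih hb
    refine ⟨hy, Reachable.trans (Adj.reachable ?_) hr⟩
    show (G.induce S).Adj ⟨a, hx⟩ ⟨b, hb⟩
    simpa using hle h

end Lemmas


/-- For every finite simple graph `G`, the map `φ_G` sending a
decomposition `Π` of `G` to the set of edges straddling distinct blocks of `Π`
is a bijection between the decompositions of `G` and the multicuts of `G`. -/
theorem bijection_decompositions_multicuts [Fintype V] [DecidableEq V]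
    (G : SimpleGraph V) :
    Set.BijOn (cutEdges G) {P | IsDecomposition G P} {M | IsMulticut G M} := by
  refine ⟨fun P hP => isMulticut_cutEdges hP, ?_, ?_⟩
  · -- InjOn
    have key : ∀ P Q : Set (Set V), IsDecomposition G P → IsDecomposition G Q →
        cutEdges G P = cutEdges G Q → P ⊆ Q := by
      intro P Q hP hQ h U hU
      obtain ⟨v, hv⟩ : U.Nonempty := Set.nonempty_coe_sort.mp (hP.2.2 U hU).nonempty
      obtain ⟨W, hW, hvW⟩ := hQ.2.1 v
      have e1 := block_eq hP hU hv
      rw [h] at e1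
      rw [show U = W from e1.trans (block_eq hQ hW hvW).symm]
      exact hW
    intro P hP Q hQ h
    exact Set.Subset.antisymm (key P Q hP hQ h) (key Q P hQ hP h.symm)
  · -- SurjOn
    intro M hM
    set H := G.deleteEdges M with hH
    have hleH : H ≤ G := G.deleteEdges_le M
    refine ⟨{S | ∃ v : V, S = compSupp H v}, ?_, ?_⟩
    · refine ⟨?_, ?_, ?_⟩
      · rintro U ⟨v, rfl⟩ W ⟨w, rfl⟩ hne
        rw [Set.disjoint_left]
        rintro u hu hw
        refine hne ?_
        have hvw : H.Reachable v w := hu.trans hw.symm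
        ext x
        exact ⟨fun hx => hvw.symm.trans hx, fun hx => hvw.trans hx⟩
      · exact fun v => ⟨compSupp H v, ⟨v, rfl⟩, Reachable.refl v⟩
      · rintro U ⟨v, rfl⟩
        rw [connected_iff]; refine ⟨?_, ⟨⟨v, Reachable.refl v⟩⟩⟩
        rintro ⟨x, hx⟩ ⟨y, hy⟩
        obtain ⟨p⟩ : H.Reachable x y := hx.symm.trans hy
        have hS : ∀ a b : V, a ∈ compSupp H v → H.Adj a b → b ∈ compSupp H v :=
          fun a b ha hab => ha.trans hab.reachable
        obtain ⟨hy', hr⟩ := induce_reachable hleH hS p hx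
        exact hr
    · ext e
      induction e using Sym2.ind with
      | _ a b =>
      constructor
      · rintro ⟨heG, hstr⟩
        by_contra heM
        have hadj : H.Adj a b := by rw [hH, deleteEdges_adj]; exact ⟨(G.mem_edgeSet).mp heG, heM⟩
        refine hstr (compSupp H a) ⟨a, rfl⟩ (fun x hx => ?_)
        rcases Sym2.mem_iff.mp hx with rfl | rfl
        · exact Reachable.refl _
        · exact hadj.reachable
      · intro heM
        refine ⟨hM.1 heM, ?_⟩
        rintro U ⟨w, rfl⟩ hall
        have ha : H.Reachable w a := hall a (by simp)
        have hb : H.Reachable w b := hall b (by simp)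
        exact not_reachable_of_multicut hM heM (ha.symm.trans hb)
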